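/- Let A be a closed, densely defined linear operator on a complex Hilbert space H with dom A = dom A*, and let C > 0 be such that for every x ∈ dom A one has max{|Re⟨Ax, x⟩|, |Im⟨Ax, x⟩|} ≥ C‖x‖². Then A is a bijection from dom A onto H and its inverse A⁻¹ is a bounded operator on H with ‖A⁻¹‖ ≤ C⁻¹. -/

import Mathlib

open scoped InnerProductSpace

/-- **(Corollary A.2 of the paper.)** A closed, densely defined operator `A` on a complex
Hilbert space with `dom A = dom A*` and `max{|Re⟨Ax,x⟩|, |Im⟨Ax,x⟩|} ≥ C‖x‖²` on its domain
is a bijection from its domain onto `H`, with bounded inverse of norm at most `C⁻¹`. -/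
theorem closed_densely_defined_re_im_coercive_has_bounded_inverse
    {H : Type*} [NormedAddCommGroup H] [InnerProductSpace ℂ H] [CompleteSpace H]
    (A : H →ₗ.[ℂ] H)
    (hclosed : A.IsClosed)
    (hdense : Dense (A.domain : Set H))
    (hdom : A.adjoint.domain = A.domain)
    (C : ℝ) (hC : 0 < C)
    (hcoer : ∀ x : A.domain,
      C * ‖(x : H)‖ ^ 2 ≤ max |(⟪A x, (x : H)⟫_ℂ).re| |(⟪A x, (x : H)⟫_ℂ).im|) :
    (∀ x y : A.domain, A x = A y → x = y) ∧
    (∀ f : H, ∃ x : A.domain, A x = f) ∧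
    (∀ x : A.domain, ‖(x : H)‖ ≤ C⁻¹ * ‖A x‖) := by
  -- Lower bound: `C‖x‖ ≤ ‖A x‖` for every `x` in the domain.
  have hlow : ∀ x : A.domain, C * ‖(x : H)‖ ≤ ‖A x‖ := by
    intro x
    rcases eq_or_ne ((x : H)) 0 with hx | hx
    · simp [hx]
    · have hxpos : 0 < ‖(x : H)‖ := norm_pos_iff.mpr hx
      have h1 : C * ‖(x : H)‖ ^ 2 ≤ ‖⟪A x, (x : H)⟫_ℂ‖ := by
        refine (hcoer x).trans (max_le ?_ ?_)
        · exact (Complex.abs_re_le_norm _)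
        · exact (Complex.abs_im_le_norm _)
      have h2 : ‖⟪A x, (x : H)⟫_ℂ‖ ≤ ‖A x‖ * ‖(x : H)‖ := norm_inner_le_norm _ _
      have := h1.trans h2
      rw [pow_two, ← mul_assoc] at this
      exact le_of_mul_le_mul_right this hxpos
  -- Injectivity
  have hinj : ∀ x y : A.domain, A x = A y → x = y := by
    intro x y hxy
    have h0 : A (x - y) = 0 := by rw [A.map_sub, hxy, sub_self]
    have := hlow (x - y)
    rw [h0] at this
    simp only [norm_zero] at this
    have : ‖((x - y : A.domain) : H)‖ ≤ 0 := by nlinarith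
    have hxy0 : ((x - y : A.domain) : H) = 0 := norm_le_zero_iff.mp this
    have : (x : H) - (y : H) = 0 := by
      simpa using hxy0
    exact Subtype.ext (sub_eq_zero.mp this)
  refine ⟨hinj, ?_, ?_⟩
  · -- Surjectivity
    intro f
    -- the range of A as a submodule
    set R : Submodule ℂ H := LinearMap.range A.toFun with hR
    have hmemR : ∀ g, g ∈ R ↔ ∃ x : A.domain, A x = g := by
      intro g; simp [hR, LinearMap.mem_range]
    -- R is closed
    have hRclosed : IsClosed (R : Set H) := by
      rw [← isSeqClosed_iff_isClosed]
      intro g gl hg hgl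
      choose x hx using fun n => (hmemR (g n)).mp (hg n)
      -- x is Cauchy
      have hcau : CauchySeq fun n => ((x n : H)) := by
        rw [Metric.cauchySeq_iff]
        intro ε hε
        have : ∃ N, ∀ m ≥ N, ∀ n ≥ N, dist (g m) (g n) < C * ε := by
          have := hgl.cauchySeq
          rw [Metric.cauchySeq_iff] at this
          exact this (C * ε) (by positivity)
        obtain ⟨N, hN⟩ := this
        refine ⟨N, fun m hm n hn => ?_⟩
        have hdist : C * dist ((x m : H)) ((x n : H)) ≤ dist (g m) (g n) := by
          rw [dist_eq_norm, dist_eq_norm]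
          have := hlow (x m - x n)
          rw [A.map_sub, hx m, hx n] at this
          simpa using this
        have := (hdist.trans_lt (hN m hm n hn))
        nlinarith [dist_nonneg (x := ((x m : H))) (y := ((x n : H)))]
      obtain ⟨xl, hxl⟩ := cauchySeq_tendsto_of_complete hcau
      -- (xl, gl) is in the closure of the graph = graph
      have hgraph : (xl, gl) ∈ A.graph := by
        have : ∀ n, ((x n : H), g n) ∈ A.graph := by
          intro n; rw [← hx n]; exact A.mem_graph (x n)
        have hlim : Filter.Tendsto (fun n => ((x n : H), g n)) Filter.atTop
            (nhds (xl, gl)) := hxl.prodMk_nhds hgl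
        exact hclosed.mem_of_tendsto hlim (Filter.Eventually.of_forall this)
      rw [LinearPMap.mem_graph_iff] at hgraph
      obtain ⟨y, hy1, hy2⟩ := hgraph
      exact (hmemR gl).mpr ⟨y, hy2⟩
    haveI : CompleteSpace R := hRclosed.completeSpace_coe
    -- orthogonal complement of R is trivial
    have hRorth : Rᗮ = ⊥ := by
      rw [Submodule.eq_bot_iff]
      intro v hv
      rw [Submodule.mem_orthogonal] at hv
      have hv' : ∀ x : A.domain, ⟪A x, v⟫_ℂ = 0 := fun x =>
        hv (A x) ((hmemR _).mpr ⟨x, rfl⟩)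
      -- v is in the adjoint domain
      have hvdom : v ∈ A.domain := by
        rw [← hdom]
        refine LinearPMap.mem_adjoint_domain_of_exists _ ⟨0, fun x => ?_⟩
        rw [inner_zero_left, ← inner_conj_symm, hv' x, map_zero]
      have h0 : ⟪A ⟨v, hvdom⟩, v⟫_ℂ = 0 := hv' ⟨v, hvdom⟩
      have := hcoer ⟨v, hvdom⟩
      rw [h0] at this
      simp only [Complex.zero_re, Complex.zero_im, abs_zero, max_self] at this
      have hv2 : ‖v‖ ^ 2 = 0 := le_antisymm (by nlinarith) (sq_nonneg _)
      have : ‖v‖ = 0 := by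
        have := pow_eq_zero_iff (n := 2) (by norm_num) |>.mp hv2
        exact this
      exact norm_eq_zero.mp this
    have hRtop : R = ⊤ := Submodule.orthogonal_eq_bot_iff.mp hRorth
    have : f ∈ R := hRtop ▸ Submodule.mem_top
    exact (hmemR f).mp this
  · -- norm bound
    intro x
    have h := hlow x
    rw [← le_div_iff₀' hC] at h
    simpa [div_eq_inv_mul] using h
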